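/- Let G be a quadratic, energy-preserving, shift-equivariant map on R^N with linearization A about the constant vector e (i.e. A = B(e, ·) where G = (1/2)B(·,·)), and let p_A be the Laurent polynomial associated with the circulant matrix A. Then p_A(1) = 0, i.e. the entries of each row of A sum to zero. -/

import Mathlib

/-- Let `G = (1/2) B(x,x)` be quadratic, shift-equivariant and energy-preserving on `R^N`,
and let `A = B(e,·)` be its linearization about `e = (1,…,1)`.  Then the entries of the
first row of the circulant matrix `A` sum to zero, i.e. `p_A(1) = 0`. -/
theorem laurent_polynomial_vanishes_at_one (N : ℕ) [NeZero N]
    (B : (ZMod N → ℝ) → (ZMod N → ℝ) → (ZMod N → ℝ))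
    (hsymm : ∀ x y, B x y = B y x)
    (hadd : ∀ x y z, B (x + y) z = B x z + B y z)
    (hsmul : ∀ (a : ℝ) (x y), B (a • x) y = a • B x y)
    (G : (ZMod N → ℝ) → (ZMod N → ℝ))
    (hG : ∀ x, G x = (1 / 2 : ℝ) • B x x)
    (hequiv : ∀ x, G (fun i => x (i + 1)) = fun i => G x (i + 1))
    (henergy : ∀ x, ∑ i : ZMod N, x i * G x i = 0) :
    ∑ j : ZMod N, B (fun _ => 1) (Pi.single j 1) 0 = 0 := by
  set e : ZMod N → ℝ := fun _ => 1 with he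
  have hzero : ∀ x, B x 0 = 0 := by
    intro x
    rw [hsymm]
    have := hsmul 0 0 x
    simpa using this
  have hadd' : ∀ x y z, B x (y + z) = B x y + B x z := by
    intro x y z
    rw [hsymm, hadd, hsymm y x, hsymm z x]
  let f : (ZMod N → ℝ) →+ (ZMod N → ℝ) :=
    { toFun := B e, map_zero' := hzero e, map_add' := hadd' e }
  have hsingle : (∑ j : ZMod N, Pi.single j (1:ℝ)) = e := by
    funext i
    simp [Finset.sum_apply, Pi.single_apply, he]
  have hsum : ∑ j : ZMod N, B e (Pi.single j 1) = B e e := by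
    have h := map_sum f (fun j : ZMod N => Pi.single j (1:ℝ)) Finset.univ
    rw [hsingle] at h
    exact h.symm
  -- G e is constant
  have hGe : ∀ i : ZMod N, G e i = G e (i + 1) := by
    intro i
    have h := hequiv e
    have : G (fun i => e (i + 1)) = G e := by congr 1
    rw [this] at h
    exact congrFun h i
  have hconst : ∀ (n : ℕ), G e 0 = G e (n : ZMod N) := by
    intro n
    induction n with
    | zero => simp
    | succ k ih => push_cast; rw [ih]; exact hGe _
  have hconst' : ∀ i : ZMod N, G e i = G e 0 := by
    intro i
    have h := hconst i.val
    rw [ZMod.natCast_val, ZMod.cast_id] at h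
    exact h.symm
  have hen := henergy e
  simp only [he, one_mul] at hen
  have hsum0 : ∑ i : ZMod N, G e i = (N : ℝ) * G e 0 := by
    rw [Finset.sum_congr rfl (fun i _ => hconst' i)]
    simp [Finset.card_univ, mul_comm]
  have hNe : (N : ℝ) ≠ 0 := Nat.cast_ne_zero.mpr (NeZero.ne N)
  have hG0 : G e 0 = 0 := by
    have : (N : ℝ) * G e 0 = 0 := by rw [← hsum0]; exact hen
    exact (mul_eq_zero.mp this).resolve_left hNe
  have hB : B e e 0 = 0 := by
    have := congrFun (hG e) 0
    rw [hG0] at this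
    have h2 : (1 / 2 : ℝ) * B e e 0 = 0 := by simpa [Pi.smul_apply] using this.symm
    linarith
  calc ∑ j : ZMod N, B e (Pi.single j 1) 0
      = (∑ j : ZMod N, B e (Pi.single j 1)) 0 := by rw [Finset.sum_apply]
    _ = B e e 0 := by rw [hsum]
    _ = 0 := hB
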